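/- For every 2-colouring of the edges of Q_n, there is a monochromatic geodesic of length ⌈n/2⌉. -/

import Mathlib

open SimpleGraph Finset
open scoped symmDiff

/-- The hypercube `Q_n` on vertex set `{0,1}^n`: two vertices are adjacent iff they
differ in exactly one coordinate. -/
def Q (n : ℕ) : SimpleGraph (Fin n → Bool) where
  Adj x y := hammingDist x y = 1
  symm := ⟨fun x y h => (hammingDist_comm y x).trans h⟩
  loopless := ⟨fun x h => by simp at h⟩

/-- The coordinate direction of a step from `x` to `y` (for an edge of `Q n`, the unique
coordinate where they differ), as a natural number. -/
def dir {n : ℕ} (x y : Fin n → Bool) : ℕ :=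
  (Finset.univ.filter fun i => x i ≠ y i).sup fun i => (i : ℕ)

/-- The list of coordinate directions of the edges of a walk in `Q n`. -/
def dirs {n : ℕ} {u v : Fin n → Bool} (p : (Q n).Walk u v) : List ℕ :=
  p.darts.map fun d => dir d.fst d.snd

/-- A geodesic in `Q n`: a path no two of whose edges lie in the same coordinate
direction. -/
def IsGeodesic {n : ℕ} {u v : Fin n → Bool} (p : (Q n).Walk u v) : Prop :=
  p.IsPath ∧ (dirs p).Nodup

/-- An increasing geodesic in `Q n`: a path whose successive edge directions strictly
increase. -/
def IsIncGeodesic {n : ℕ} {u v : Fin n → Bool} (p : (Q n).Walk u v) : Prop :=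
  p.IsPath ∧ (dirs p).Chain' (· < ·)

/-- `maxInc G x` is the maximum length of an increasing geodesic contained in the
subgraph `G` of `Q n` and ending at the vertex `x`. -/
noncomputable def maxInc {n : ℕ} (G : (Q n).Subgraph) (x : Fin n → Bool) : ℕ :=
  sSup {l | ∃ u, ∃ p : (Q n).Walk u x, p.toSubgraph ≤ G ∧ IsIncGeodesic p ∧ p.length = l}
-- flip coordinate i (as a ℕ); identity if i ≥ n
def flipC {n : ℕ} (x : Fin n → Bool) (i : ℕ) : Fin n → Bool :=
  fun j => if (j : ℕ) = i then !(x j) else x j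

lemma flipC_flipC {n : ℕ} (x : Fin n → Bool) (i : ℕ) : flipC (flipC x i) i = x := by
  funext j; simp only [flipC]; by_cases h : (j : ℕ) = i <;> simp [h]

lemma flipC_diff {n : ℕ} (x : Fin n → Bool) (i : ℕ) (j : Fin n) :
    x j ≠ flipC x i j ↔ (j : ℕ) = i := by
  simp only [flipC]; by_cases h : (j : ℕ) = i <;> simp [h]

lemma filter_flipC {n : ℕ} (x : Fin n → Bool) (i : ℕ) (hi : i < n) :
    (Finset.univ.filter fun j => x j ≠ flipC x i j) = {⟨i, hi⟩} := by
  ext j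
  simp [flipC_diff, Fin.ext_iff]

lemma adj_flipC {n : ℕ} (x : Fin n → Bool) (i : ℕ) (hi : i < n) :
    (Q n).Adj x (flipC x i) := by
  show hammingDist x (flipC x i) = 1
  unfold hammingDist
  rw [show ({j | x j ≠ flipC x i j} : Finset (Fin n)) = Finset.univ.filter fun j => x j ≠ flipC x i j from rfl, filter_flipC x i hi]
  simp

lemma dir_flipC {n : ℕ} (x : Fin n → Bool) (i : ℕ) (hi : i < n) :
    dir x (flipC x i) = i := by
  unfold dir
  rw [filter_flipC x i hi]
  simp

-- adjacency gives unique differing coordinate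
lemma adj_exists {n : ℕ} {x y : Fin n → Bool} (h : (Q n).Adj x y) :
    ∃ j : Fin n, (∀ k, x k ≠ y k ↔ k = j) ∧ dir x y = (j : ℕ) := by
  have h1 : (Finset.univ.filter fun i => x i ≠ y i).card = 1 := h
  obtain ⟨j0, hj⟩ := Finset.card_eq_one.mp h1
  refine ⟨j0, fun k => ?_, ?_⟩
  · constructor
    · intro hk
      have : k ∈ Finset.univ.filter fun i => x i ≠ y i := by simp [hk]
      rw [hj] at this; simpa using this
    · intro hk
      have : j0 ∈ Finset.univ.filter fun i => x i ≠ y i := by rw [hj]; simp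
      rw [hk]; simpa using this
  · unfold dir; rw [hj]; simp

lemma dirs_cons {n : ℕ} {u v w : Fin n → Bool} (h : (Q n).Adj u v) (p : (Q n).Walk v w) :
    dirs (SimpleGraph.Walk.cons h p) = dir u v :: dirs p := by
  simp [dirs]

lemma dirs_concat {n : ℕ} {u v w : Fin n → Bool} (p : (Q n).Walk u v) (h : (Q n).Adj v w) :
    dirs (p.concat h) = dirs p ++ [dir v w] := by
  simp [dirs, SimpleGraph.Walk.darts_concat]

lemma dirs_length {n : ℕ} {u v : Fin n → Bool} (p : (Q n).Walk u v) :
    (dirs p).length = p.length := by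
  simp [dirs]

lemma support_diff {n : ℕ} {a b : Fin n → Bool} (q : (Q n).Walk a b) :
    ∀ w ∈ q.support, ∀ j : Fin n, w j ≠ a j → (j : ℕ) ∈ dirs q := by
  induction q with
  | nil => intro w hw j hj; simp at hw; subst hw; exact absurd rfl hj
  | cons h q ih =>
    rename_i u u' v
    intro w hw j hj
    rw [SimpleGraph.Walk.support_cons] at hw
    rw [dirs_cons]
    rcases List.mem_cons.mp hw with rfl | hw'
    · exact absurd rfl hj
    · by_cases hju : w j ≠ u' j
      · exact List.mem_cons_of_mem _ (ih w hw' j hju)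
      · push_neg at hju
        obtain ⟨j0, hiff, hdir⟩ := adj_exists h
        have : j = j0 := (hiff j).mp (by rw [← hju]; exact fun e => hj e.symm)
        rw [this] at *
        exact List.mem_cons.mpr (Or.inl hdir.symm)

lemma isPath_of_nodup_dirs {n : ℕ} {u v : Fin n → Bool} (p : (Q n).Walk u v)
    (hd : (dirs p).Nodup) : p.IsPath := by
  induction p with
  | nil => exact SimpleGraph.Walk.IsPath.nil
  | cons h q ih =>
    rename_i a a' b
    rw [dirs_cons] at hd
    refine SimpleGraph.Walk.IsPath.cons (ih hd.of_cons) ?_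
    intro hmem
    obtain ⟨j0, hiff, hdir⟩ := adj_exists h
    have hne : a j0 ≠ a' j0 := (hiff j0).mpr rfl
    have : (j0 : ℕ) ∈ dirs q := support_diff q a hmem j0 hne
    rw [← hdir] at this
    exact (List.nodup_cons.mp hd).1 this

def P {n : ℕ} (c : Sym2 (Fin n → Bool) → Bool) (b : Bool) (i : ℕ) (x : Fin n → Bool) (l : ℕ) : Prop :=
  ∃ u, ∃ p : (Q n).Walk u x, p.length = l ∧ (∀ d ∈ dirs p, d < i) ∧ (dirs p).Nodup ∧
    ∀ e ∈ p.edges, c e = b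

def f {n : ℕ} (c : Sym2 (Fin n → Bool) → Bool) : ℕ → Bool → (Fin n → Bool) → ℕ
  | 0, _, _ => 0
  | (i+1), b, x =>
    if i < n ∧ c s(x, flipC x i) = b then
      max (f c i b x) (f c i b (flipC x i) + 1)
    else f c i b x

lemma f_mono_step {n : ℕ} (c : Sym2 (Fin n → Bool) → Bool) (i : ℕ) (b : Bool)
    (x : Fin n → Bool) : f c i b x ≤ f c (i + 1) b x := by
  rw [f]
  split
  · exact le_max_left _ _
  · exact le_rfl

lemma f_step {n : ℕ} (c : Sym2 (Fin n → Bool) → Bool) (i : ℕ) (hi : i < n)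
    (x : Fin n → Bool) :
    f c i (c s(x, flipC x i)) (flipC x i) + 1 ≤ f c (i + 1) (c s(x, flipC x i)) x := by
  rw [f, if_pos ⟨hi, rfl⟩]
  exact le_max_right _ _

lemma realize {n : ℕ} (c : Sym2 (Fin n → Bool) → Bool) (i : ℕ) (b : Bool)
    (x : Fin n → Bool) : P c b i x (f c i b x) := by
  induction i generalizing x with
  | zero => exact ⟨x, SimpleGraph.Walk.nil, by simp [f, dirs], by simp [dirs], by simp [dirs], by simp⟩
  | succ i ih =>
    rw [f]
    split
    · rename_i hcond
      obtain ⟨hi, hc⟩ := hcond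
      rcases Nat.le_total (f c i b (flipC x i) + 1) (f c i b x) with hle | hle
      · rw [Nat.max_eq_left hle]
        obtain ⟨u, p, h1, h2, h3, h4⟩ := ih x
        exact ⟨u, p, h1, fun d hd => Nat.lt_succ_of_lt (h2 d hd), h3, h4⟩
      · rw [Nat.max_eq_right hle]
        obtain ⟨u, p, h1, h2, h3, h4⟩ := ih (flipC x i)
        have hadj : (Q n).Adj (flipC x i) x := by
          have := adj_flipC (flipC x i) i hi
          rwa [flipC_flipC] at this
        refine ⟨u, p.concat hadj, ?_, ?_, ?_, ?_⟩
        · rw [SimpleGraph.Walk.length_concat, h1]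
        · rw [dirs_concat]
          intro d hd
          rcases List.mem_append.mp hd with hd | hd
          · exact Nat.lt_succ_of_lt (h2 d hd)
          · simp at hd
            have : dir (flipC x i) x = i := by
              have := dir_flipC (flipC x i) i hi
              rwa [flipC_flipC] at this
            omega
        · rw [dirs_concat, List.nodup_append]
          refine ⟨h3, List.nodup_singleton _, ?_⟩
          intro d hd e hd' hde
          simp at hd'
          rw [← hde] at hd'
          have : dir (flipC x i) x = i := by
            have := dir_flipC (flipC x i) i hi
            rwa [flipC_flipC] at this
          rw [this] at hd'
          exact absurd (h2 d hd) (by omega)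
        · rw [SimpleGraph.Walk.edges_concat]
          intro e he
          rcases (by simpa using he : e ∈ p.edges ∨ e = s(flipC x i, x)) with he | he
          · exact h4 e he
          · rw [he, Sym2.eq_swap]
            exact hc
    · obtain ⟨u, p, h1, h2, h3, h4⟩ := ih x
      exact ⟨u, p, h1, fun d hd => Nat.lt_succ_of_lt (h2 d hd), h3, h4⟩

lemma pointwise_step {n : ℕ} (c : Sym2 (Fin n → Bool) → Bool) (i : ℕ) (hi : i < n)
    (x : Fin n → Bool) :
    f c i (c s(x, flipC x i)) (flipC x i) + 1 + f c i (!(c s(x, flipC x i))) x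
      ≤ f c (i + 1) true x + f c (i + 1) false x := by
  have h1 := f_step c i hi x
  have h2 := f_mono_step c i (!(c s(x, flipC x i))) x
  cases h : c s(x, flipC x i) <;> rw [h] at h1 h2 <;> simp only [Bool.not_true, Bool.not_false] at * <;> omega

lemma cb_flip {n : ℕ} (c : Sym2 (Fin n → Bool) → Bool) (i : ℕ) (x : Fin n → Bool) :
    c s(flipC x i, flipC (flipC x i) i) = c s(x, flipC x i) := by
  rw [flipC_flipC, Sym2.eq_swap]

lemma flip_bijective {n : ℕ} (i : ℕ) : Function.Bijective (fun x : Fin n → Bool => flipC x i) :=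
  Function.Involutive.bijective (fun x => flipC_flipC x i)

lemma sum_step {n : ℕ} (c : Sym2 (Fin n → Bool) → Bool) (i : ℕ) (hi : i < n) :
    (∑ x : Fin n → Bool, (f c i true x + f c i false x)) + 2 ^ n
      ≤ ∑ x : Fin n → Bool, (f c (i + 1) true x + f c (i + 1) false x) := by
  have e1 : ∑ x : Fin n → Bool, f c i (c s(x, flipC x i)) x
      = ∑ x : Fin n → Bool, f c i (c s(x, flipC x i)) (flipC x i) := by
    refine Fintype.sum_bijective _ (flip_bijective i) _ _ ?_
    intro x
    show f c i (c s(x, flipC x i)) x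
      = f c i (c s(flipC x i, flipC (flipC x i) i)) (flipC (flipC x i) i)
    rw [cb_flip c i x, flipC_flipC]
  have e2 : ∑ x : Fin n → Bool, (f c i true x + f c i false x)
      = ∑ x : Fin n → Bool, (f c i (c s(x, flipC x i)) x + f c i (!(c s(x, flipC x i))) x) := by
    refine Finset.sum_congr rfl fun x _ => ?_
    cases h : c s(x, flipC x i) <;> simp <;> omega
  have card2 : ∑ _x : Fin n → Bool, 1 = 2 ^ n := by
    simp [Fintype.card_fun]
  have A : ∑ x : Fin n → Bool, (f c i (c s(x, flipC x i)) (flipC x i) + 1 + f c i (!(c s(x, flipC x i))) x)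
      = (∑ x : Fin n → Bool, f c i (c s(x, flipC x i)) (flipC x i))
        + (∑ x : Fin n → Bool, f c i (!(c s(x, flipC x i))) x) + 2 ^ n := by
    rw [Finset.sum_add_distrib, Finset.sum_add_distrib, card2]; ring
  have C : (∑ x : Fin n → Bool, f c i (c s(x, flipC x i)) x)
      + (∑ x : Fin n → Bool, f c i (!(c s(x, flipC x i))) x)
      = ∑ x : Fin n → Bool, (f c i true x + f c i false x) := by
    rw [← Finset.sum_add_distrib]; exact e2.symm
  calc (∑ x : Fin n → Bool, (f c i true x + f c i false x)) + 2 ^ n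
      = (∑ x : Fin n → Bool, f c i (c s(x, flipC x i)) x)
        + (∑ x : Fin n → Bool, f c i (!(c s(x, flipC x i))) x) + 2 ^ n := by rw [C]
    _ = ∑ x : Fin n → Bool, (f c i (c s(x, flipC x i)) (flipC x i) + 1 + f c i (!(c s(x, flipC x i))) x) := by
        rw [e1]
        exact A.symm
    _ ≤ ∑ x : Fin n → Bool, (f c (i + 1) true x + f c (i + 1) false x) :=
        Finset.sum_le_sum fun x _ => pointwise_step c i hi x

lemma sum_ge {n : ℕ} (c : Sym2 (Fin n → Bool) → Bool) :
    ∀ i ≤ n, i * 2 ^ n ≤ ∑ x : Fin n → Bool, (f c i true x + f c i false x) := by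
  intro i
  induction i with
  | zero => intro _; simp
  | succ i ih =>
    intro hii
    have h1 := ih (by omega)
    have h2 := sum_step c i (by omega)
    have : (i + 1) * 2 ^ n = i * 2 ^ n + 2 ^ n := by ring
    omega

lemma shrink {n : ℕ} (c : Sym2 (Fin n → Bool) → Bool) (b : Bool) :
    ∀ {u x : Fin n → Bool} (p : (Q n).Walk u x), (dirs p).Nodup →
      (∀ e ∈ p.edges, c e = b) → ∀ l' ≤ p.length,
      ∃ u', ∃ q : (Q n).Walk u' x, q.length = l' ∧ (dirs q).Nodup ∧ ∀ e ∈ q.edges, c e = b := by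
  intro u x p
  induction p with
  | nil =>
    intro _ _ l' hl'
    simp at hl'
    exact ⟨_, SimpleGraph.Walk.nil, by simp [hl'], by simp [dirs], by simp⟩
  | cons h p ih =>
    intro hnd hcol l' hl'
    rw [dirs_cons] at hnd
    rcases Nat.lt_or_ge l' (SimpleGraph.Walk.cons h p).length with hlt | hge
    · refine ih hnd.of_cons (fun e he => hcol e ?_) l' ?_
      · rw [SimpleGraph.Walk.edges_cons]; exact List.mem_cons_of_mem _ he
      · rw [SimpleGraph.Walk.length_cons] at hlt; omega
    · exact ⟨_, SimpleGraph.Walk.cons h p, le_antisymm hge hl', by rw [dirs_cons]; exact hnd, hcol⟩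


/-- Every 2-colouring of the edges of `Q n` contains a monochromatic geodesic of length
`⌈n/2⌉`. -/
theorem stmt10 (n : ℕ) (c : Sym2 (Fin n → Bool) → Bool) :
    ∃ (u v : Fin n → Bool) (p : (Q n).Walk u v),
      IsGeodesic p ∧ p.length = (n + 1) / 2 ∧ ∃ b, ∀ e ∈ p.edges, c e = b := by
  have hsum := sum_ge c n le_rfl
  have hconst : ∑ _x : Fin n → Bool, n = n * 2 ^ n := by
    simp [Fintype.card_fun, Nat.mul_comm]
  obtain ⟨x, -, hx⟩ := Finset.exists_le_of_sum_le (s := (Finset.univ : Finset (Fin n → Bool)))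
    (f := fun _ => n) (g := fun x => f c n true x + f c n false x)
    Finset.univ_nonempty (by rw [hconst]; exact hsum)
  -- choose the majority colour
  obtain ⟨b, hb⟩ : ∃ b : Bool, (n + 1) / 2 ≤ f c n b x := by
    rcases Nat.le_total (f c n true x) (f c n false x) with hle | hle
    · exact ⟨false, by omega⟩
    · exact ⟨true, by omega⟩
  obtain ⟨u, p, hlen, -, hnd, hcol⟩ := realize c n b x
  obtain ⟨u', q, hq1, hq2, hq3⟩ := shrink c b p hnd hcol ((n + 1) / 2) (by omega)
  exact ⟨u', x, q, ⟨isPath_of_nodup_dirs q hq2, hq2⟩, hq1, b, hq3⟩
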